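/- Let k, t be integers with 1 ≤ t ≤ k, and let S = {π1, …, πn} (n ≥ 2) be a (k; k−t)-SCID in a finite-dimensional vector space V over a field, i.e. a set of n distinct k-dimensional subspaces pairwise intersecting in subspaces of dimension k−t. Then δ(S) = (k, t, t, …, t) (that is, δ_j = t for all 2 ≤ j ≤ n) if and only if S is a (k−t)-sunflower of maximal dimension, i.e. there is a (k−t)-dimensional subspace V' such that π_i ∩ π_j = V' for all i ≠ j and dim⟨π1, …, πn⟩ = (k−t) + n·t. -/

import Mathlib

open Module

variable {F : Type*} [Field F] {V : Type*} [AddCommGroup V] [Module F V]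
  [FiniteDimensional F V]

/-- The subspace `⟨π_1, …, π_j⟩` (1-based), i.e. the span of the `π i` with `(i : ℕ) < j`. -/
def pspan {n : ℕ} (π : Fin n → Submodule F V) (j : ℕ) : Submodule F V :=
  ⨆ i : Fin n, ⨆ _ : (i : ℕ) < j, π i

/-- The 1-based difference sequence `δ_j = dim⟨π_1,…,π_j⟩ - dim⟨π_1,…,π_{j-1}⟩`. -/
noncomputable def delta {n : ℕ} (π : Fin n → Submodule F V) (j : ℕ) : ℕ :=
  finrank F ↥(pspan π j) - finrank F ↥(pspan π (j - 1))

/-- A `(k; ℓ_1, …, ℓ_v)`-SPID, where `L` is the set of prescribed intersection dimensions: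
a family of pairwise distinct `k`-dimensional subspaces, any two distinct members meeting
in a dimension belonging to `L`, and every value of `L` being attained. -/
def IsSPID {n : ℕ} (k : ℕ) (L : Set ℕ) (π : Fin n → Submodule F V) : Prop :=
  Function.Injective π ∧
  (∀ i, finrank F ↥(π i) = k) ∧
  (∀ i j, i ≠ j → finrank F ↥(π i ⊓ π j) ∈ L) ∧
  ∀ ℓ ∈ L, ∃ i j, i ≠ j ∧ finrank F ↥(π i ⊓ π j) = ℓ

/-- An `ℓ`-junta: all members pass through a common `ℓ`-dimensional subspace. -/
def IsJunta {n : ℕ} (ℓ : ℕ) (π : Fin n → Submodule F V) : Prop :=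
  ∃ C : Submodule F V, finrank F ↥C = ℓ ∧ ∀ i, C ≤ π i

/-- `S` contains an `ℓ`-sunflower of maximal dimension with `p` petals (all petals being
`k`-dimensional): `p` members of `S` pairwise meeting exactly in a common `ℓ`-dimensional
center and spanning a subspace of dimension `ℓ + p(k - ℓ)`. -/
def HasMaxSunflower (k ℓ p : ℕ) (S : Set (Submodule F V)) : Prop :=
  ∃ A : Finset (Submodule F V), ↑A ⊆ S ∧ A.card = p ∧
    ∃ C : Submodule F V, finrank F ↥C = ℓ ∧
      (∀ W ∈ A, ∀ W' ∈ A, W ≠ W' → W ⊓ W' = C) ∧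
      finrank F ↥(A.sup id) = ℓ + p * (k - ℓ)

set_option linter.unusedSectionVars false

lemma pspan_zero {n : ℕ} (π : Fin n → Submodule F V) : pspan π 0 = ⊥ := by
  simp [pspan]

lemma le_pspan {n : ℕ} (π : Fin n → Submodule F V) {j : ℕ} (i : Fin n) (h : (i : ℕ) < j) :
    π i ≤ pspan π j :=
  le_iSup_of_le i (le_iSup_of_le h le_rfl)

lemma pspan_mono {n : ℕ} (π : Fin n → Submodule F V) {j j' : ℕ} (h : j ≤ j') :
    pspan π j ≤ pspan π j' := by
  apply iSup_le; intro i; apply iSup_le; intro hi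
  exact le_pspan π i (lt_of_lt_of_le hi h)

lemma pspan_succ {n : ℕ} (π : Fin n → Submodule F V) {j : ℕ} (hj : j < n) :
    pspan π (j + 1) = pspan π j ⊔ π ⟨j, hj⟩ := by
  apply le_antisymm
  · apply iSup_le; intro i; apply iSup_le; intro hi
    rcases Nat.lt_succ_iff_lt_or_eq.mp hi with h | h
    · exact le_sup_of_le_left (le_pspan π i h)
    · have : i = ⟨j, hj⟩ := Fin.ext h
      rw [this]; exact le_sup_right
  · apply sup_le
    · exact pspan_mono π (Nat.le_succ j)
    · exact le_pspan π ⟨j, hj⟩ (Nat.lt_succ_self j)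

lemma pspan_n {n : ℕ} (π : Fin n → Submodule F V) : pspan π n = ⨆ i, π i := by
  apply le_antisymm
  · apply iSup_le; intro i; apply iSup_le; intro _; exact le_iSup π i
  · apply iSup_le; intro i; exact le_pspan π i i.isLt

lemma pspan_one {n : ℕ} (π : Fin n → Submodule F V) (hn : 0 < n) :
    pspan π 1 = π ⟨0, hn⟩ := by
  have := pspan_succ π hn
  rw [pspan_zero] at this
  simpa using this

lemma mul_pred_aux (a t : ℕ) (h : 1 ≤ a) : a * t = (a - 1) * t + t := by
  have e : a - 1 + 1 = a := by omega
  calc a * t = (a - 1 + 1) * t := by rw [e]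
    _ = (a - 1) * t + t := by ring


/-- Remark 1.3: for a `(k; k-t)`-SCID, `δ(S) = (k, t, …, t)` iff `S` is a
`(k-t)`-sunflower of maximal dimension. -/
theorem statement2 {n k t : ℕ} (ht : 1 ≤ t) (htk : t ≤ k) (hn : 2 ≤ n)
    (π : Fin n → Submodule F V)
    (hS : IsSPID k {k - t} π) :
    (∀ j, 2 ≤ j → j ≤ n → delta π j = t) ↔
      ∃ V' : Submodule F V, finrank F ↥V' = k - t ∧
        (∀ i j, i ≠ j → π i ⊓ π j = V') ∧
        finrank F ↥(⨆ i, π i) = (k - t) + n * t := by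
  obtain ⟨hinj, hdim, hint, -⟩ := hS
  have hint' : ∀ i j : Fin n, i ≠ j → finrank F ↥(π i ⊓ π j) = k - t := by
    intro i j hij
    have := hint i j hij
    simpa using this
  set D : ℕ → ℕ := fun j => finrank F ↥(pspan π j) with hD
  have hmono : ∀ {a b : ℕ}, a ≤ b → D a ≤ D b := by
    intro a b h
    exact Submodule.finrank_mono (pspan_mono π h)
  have hd1 : D 1 = k := by
    simp only [hD]
    rw [pspan_one π (by omega)]
    exact hdim _
  have hstep : ∀ (j : ℕ) (hj : j < n),
      D (j + 1) + finrank F ↥(pspan π j ⊓ π ⟨j, hj⟩) = D j + k := by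
    intro j hj
    simp only [hD]
    rw [pspan_succ π hj, ← hdim ⟨j, hj⟩]
    exact Submodule.finrank_sup_add_finrank_inf_eq _ _
  have hlow : ∀ (j : ℕ) (hj : j < n), 1 ≤ j →
      k - t ≤ finrank F ↥(pspan π j ⊓ π ⟨j, hj⟩) := by
    intro j hj h1
    have hne : (⟨0, by omega⟩ : Fin n) ≠ ⟨j, hj⟩ := by
      simp only [ne_eq, Fin.mk.injEq]; omega
    rw [← hint' _ _ hne]
    exact Submodule.finrank_mono
      (inf_le_inf_right _ (le_pspan π ⟨0, by omega⟩ (by show 0 < j; omega)))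
  have hub : ∀ (j : ℕ), j < n → 1 ≤ j → D (j + 1) ≤ D j + t := by
    intro j hj h1
    have h := hstep j hj
    have h2 := hlow j hj h1
    omega
  -- chain upper bound
  have hchain : ∀ (m j : ℕ), 1 ≤ j → j + m ≤ n → D (j + m) ≤ D j + m * t := by
    intro m
    induction m with
    | zero => intro j _ _; simp
    | succ p ih =>
      intro j h1 hjn
      have h1' : 1 ≤ j + p := by omega
      have hlt : j + p < n := by omega
      have := hub (j + p) hlt h1'
      have := ih j h1 (by omega)
      have e : (p + 1) * t = p * t + t := by ring
      have : j + (p + 1) = j + p + 1 := by omega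
      rw [this]
      omega
  constructor
  · -- forward direction
    intro hδ
    have hDeq : ∀ j, 1 ≤ j → j ≤ n → D j = k + (j - 1) * t := by
      intro j
      induction j with
      | zero => omega
      | succ m ih =>
        intro _ hjn
        rcases Nat.eq_zero_or_pos m with hm | hm
        · subst hm; simpa using hd1
        · have ihm := ih hm (by omega)
          have hδm : delta π (m + 1) = t := hδ (m + 1) (by omega) hjn
          have hδm' : D (m + 1) - D m = t := by
            simpa [delta, hD] using hδm
          have h1 := hub m (by omega) hm
          have h2 := hmono (Nat.le_succ m)
          have e1 : (m + 1 - 1) * t = m * t := by norm_num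
          have e2 := mul_pred_aux m t hm
          omega
    have hDn : D n = k + (n - 1) * t := hDeq n (by omega) le_rfl
    -- key: intersection with previous span
    have hkey : ∀ (j : ℕ) (hj : j < n), 1 ≤ j →
        ∀ i : Fin n, (i : ℕ) < j → π i ⊓ π ⟨j, hj⟩ = pspan π j ⊓ π ⟨j, hj⟩ := by
      intro j hj h1 i hi
      have hx : finrank F ↥(pspan π j ⊓ π ⟨j, hj⟩) = k - t := by
        have h := hstep j hj
        have e1 := hDeq j h1 (by omega)
        have e2 := hDeq (j + 1) (by omega) hj
        have e3 := mul_pred_aux j t h1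
        have e4 : (j + 1 - 1) * t = j * t := by norm_num
        omega
      have hne : i ≠ ⟨j, hj⟩ := by
        intro h; rw [h] at hi; simp at hi
      exact Submodule.eq_of_le_of_finrank_eq
        (inf_le_inf_right _ (le_pspan π i hi))
        (by rw [hint' _ _ hne, hx])
    set i0 : Fin n := ⟨0, by omega⟩ with hi0
    set i1 : Fin n := ⟨1, by omega⟩ with hi1
    have hne01 : i0 ≠ i1 := by simp [hi0, hi1, Fin.ext_iff]
    refine ⟨π i0 ⊓ π i1, hint' _ _ hne01, ?_, ?_⟩
    · -- all pairwise intersections equal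
      have hcenter : ∀ j : Fin n, ∀ i : Fin n, (i : ℕ) < (j : ℕ) →
          π i ⊓ π j = π i0 ⊓ π i1 := by
        intro j i hi
        have hj1 : 1 ≤ (j : ℕ) := by omega
        have hjeta : (⟨(j : ℕ), j.isLt⟩ : Fin n) = j := by simp
        rcases Nat.eq_or_lt_of_le hj1 with hj2 | hj2
        · -- j = 1, so i = 0
          have hj' : j = i1 := by
            apply Fin.ext; simp [hi1]; omega
          have hi' : i = i0 := by
            apply Fin.ext; simp [hi0]; omega
          rw [hj', hi']
        · -- j ≥ 2
          have E0 : π i0 ⊓ π j = pspan π (j : ℕ) ⊓ π j := by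
            have := hkey (j : ℕ) j.isLt hj1 i0 (by simp [hi0]; omega)
            rwa [hjeta] at this
          have E1 : π i1 ⊓ π j = pspan π (j : ℕ) ⊓ π j := by
            have := hkey (j : ℕ) j.isLt hj1 i1 (by simp [hi1]; omega)
            rwa [hjeta] at this
          have Ei : π i ⊓ π j = pspan π (j : ℕ) ⊓ π j := by
            have := hkey (j : ℕ) j.isLt hj1 i hi
            rwa [hjeta] at this
          have hle : π i0 ⊓ π j ≤ π i0 ⊓ π i1 := by
            refine le_inf inf_le_left ?_
            rw [E0, ← E1]; exact inf_le_left
          have hne0j : i0 ≠ j := by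
            intro h; rw [← h] at hj1; simp [hi0] at hj1
          have h00 : π i0 ⊓ π j = π i0 ⊓ π i1 :=
            Submodule.eq_of_le_of_finrank_eq hle
              (by rw [hint' _ _ hne0j, hint' _ _ hne01])
          rw [Ei, ← E0, h00]
      intro a b hab
      rcases lt_trichotomy (a : ℕ) (b : ℕ) with h | h | h
      · exact hcenter b a h
      · exact absurd (Fin.ext h) hab
      · rw [inf_comm]; exact hcenter a b h
    · -- span dimension
      have : finrank F ↥(⨆ i, π i) = D n := by
        simp only [hD]; rw [pspan_n]
      rw [this, hDn]
      have e := mul_pred_aux n t (by omega)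
      omega
  · -- backward direction
    rintro ⟨V', hV'dim, hpair, hspan⟩
    have hDn : D n = k + (n - 1) * t := by
      have : D n = finrank F ↥(⨆ i, π i) := by
        simp only [hD]; rw [pspan_n]
      have e := mul_pred_aux n t (by omega)
      omega
    have hDub : ∀ j, 1 ≤ j → j ≤ n → D j ≤ k + (j - 1) * t := by
      intro j
      induction j with
      | zero => omega
      | succ m ih =>
        intro _ hjn
        rcases Nat.eq_zero_or_pos m with hm | hm
        · subst hm; simp [hd1]
        · have ihm := ih hm (by omega)
          have h1 := hub m (by omega) hm
          have e1 : (m + 1 - 1) * t = m * t := by norm_num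
          have e2 := mul_pred_aux m t hm
          omega
    have hDeq : ∀ j, 1 ≤ j → j ≤ n → D j = k + (j - 1) * t := by
      intro j h1 hjn
      have hchain' := hchain (n - j) j h1 (by omega)
      rw [show j + (n - j) = n by omega] at hchain'
      have hsplit : (n - 1) * t = (j - 1) * t + (n - j) * t := by
        rw [← Nat.add_mul]
        congr 1
        omega
      have := hDub j h1 hjn
      omega
    intro j h2 hjn
    have e1 := hDeq j (by omega) hjn
    have e2 := hDeq (j - 1) (by omega) (by omega)
    have e3 : (j - 1) * t = (j - 1 - 1) * t + t := mul_pred_aux (j - 1) t (by omega)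
    simp only [delta, hD] at *
    omega
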